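/- For any metric Jordan curve Γ and any subarc A ⊂ Γ, the diameter of A with respect to the diameter distance dd equals the diameter of A with respect to the original metric: diam_dd A = diam A. -/

import Mathlib

open Metric Set Bornology

noncomputable section

abbrev S1 := AddCircle (1 : ℝ)

/-- The closed arc on the unit circle from `x` counterclockwise to `y`. -/
def arcCCW (x y : S1) : Set S1 :=
  (fun t : ℝ => x + (t : S1)) '' Set.Icc 0 ((AddCircle.equivIco 1 0 (y - x) : ℝ))

/-- The diameter distance on a Jordan curve `Γ` parametrized by `e : S1 ≃ₜ Γ`:
the diameter of the subarc of smaller diameter between `x` and `y`. -/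
def ddist {Γ : Type*} [MetricSpace Γ] (e : S1 ≃ₜ Γ) (x y : Γ) : ℝ :=
  min (diam (e '' arcCCW (e.symm x) (e.symm y))) (diam (e '' arcCCW (e.symm y) (e.symm x)))

/-- `f` is an `H`-weak-quasisymmetry. -/
def IsWeakQS {X Y : Type*} [MetricSpace X] [MetricSpace Y] (f : X → Y) (H : ℝ) : Prop :=
  ∀ x y z : X, dist x y ≤ dist x z → dist (f x) (f y) ≤ H * dist (f x) (f z)

lemma coe_equivIco (z : S1) : ((AddCircle.equivIco 1 0 z : ℝ) : S1) = z :=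
  (AddCircle.equivIco 1 0).symm_apply_apply z

lemma equivIco_coe {t : ℝ} (h : t ∈ Set.Ico (0:ℝ) 1) :
    ((AddCircle.equivIco 1 0 (↑t : S1) : ℝ)) = t := by
  have : (AddCircle.equivIco 1 0) (↑t : S1) = ⟨t, by simpa using h⟩ := by
    rw [Equiv.apply_eq_iff_eq_symm_apply]; rfl
  rw [this]

lemma equivIco_mem (z : S1) : (AddCircle.equivIco 1 0 z : ℝ) ∈ Set.Ico (0:ℝ) 1 := by
  simpa using (AddCircle.equivIco 1 0 z).2

lemma self_mem_arcCCW (x y : S1) : x ∈ arcCCW x y :=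
  ⟨0, ⟨le_refl 0, (equivIco_mem (y - x)).1⟩, by simp⟩

lemma right_mem_arcCCW (x y : S1) : y ∈ arcCCW x y := by
  refine ⟨(AddCircle.equivIco 1 0 (y - x) : ℝ), ⟨(equivIco_mem _).1, le_refl _⟩, ?_⟩
  simp [coe_equivIco (y - x)]

lemma isCompact_arcCCW (x y : S1) : IsCompact (arcCCW x y) :=
  (isCompact_Icc).image (by
    exact continuous_const.add (AddCircle.continuous_mk' 1))

/-- If x, y lie on the arc from a to b with parameters s ≤ u, then arc x→y ⊆ arc a→b. -/
lemma arc_subset {a b : S1} {s u : ℝ} (hs : 0 ≤ s) (hsu : s ≤ u)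
    (hu : u ≤ (AddCircle.equivIco 1 0 (b - a) : ℝ)) :
    arcCCW (a + (s : S1)) (a + (u : S1)) ⊆ arcCCW a b := by
  have hL : (AddCircle.equivIco 1 0 (b - a) : ℝ) < 1 := (equivIco_mem (b - a)).2
  have hcoe : ∀ v w : ℝ, ((v + w : ℝ) : S1) = (v : S1) + (w : S1) := fun v w => rfl
  have hcoe' : ∀ v w : ℝ, ((v - w : ℝ) : S1) = (v : S1) - (w : S1) := fun v w => rfl
  have hdiff : (a + (u : S1)) - (a + (s : S1)) = ((u - s : ℝ) : S1) := by
    rw [hcoe']; abel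
  have hlen : (AddCircle.equivIco 1 0 ((a + (u : S1)) - (a + (s : S1))) : ℝ) = u - s := by
    rw [hdiff]; exact equivIco_coe ⟨by linarith, by linarith⟩
  rintro z ⟨t, ht, rfl⟩
  rw [hlen] at ht
  refine ⟨s + t, ⟨by linarith [ht.1], by linarith [ht.2]⟩, ?_⟩
  show a + ((s + t : ℝ) : S1) = a + (s : S1) + (t : S1)
  rw [hcoe]
  abel

lemma mem_arcCCW_iff {a b : S1} {z : S1} :
    z ∈ arcCCW a b ↔ ∃ t : ℝ, t ∈ Set.Icc 0 ((AddCircle.equivIco 1 0 (b - a) : ℝ)) ∧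
      z = a + (t : S1) := by
  constructor
  · rintro ⟨t, ht, rfl⟩; exact ⟨t, ht, rfl⟩
  · rintro ⟨t, ht, rfl⟩; exact ⟨t, ht, rfl⟩

/-- For two points on an arc, one of the two arcs between them is inside the arc. -/
lemma arc_or_arc {a b p q : S1} (hp : p ∈ arcCCW a b) (hq : q ∈ arcCCW a b) :
    arcCCW p q ⊆ arcCCW a b ∨ arcCCW q p ⊆ arcCCW a b := by
  obtain ⟨s, hs, rfl⟩ := hp
  obtain ⟨u, hu, rfl⟩ := hq
  rcases le_total s u with h | h
  · exact Or.inl (arc_subset hs.1 h hu.2)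
  · exact Or.inr (arc_subset hu.1 h hs.2)

/-- For any subarc `A ⊆ Γ`, the diameter of `A` with respect to the diameter distance
equals the diameter of `A` with respect to the original metric. -/
theorem ddDiam_eq_diam {Γ : Type*} [MetricSpace Γ] (e : S1 ≃ₜ Γ) (a b : S1)
    (A : Set Γ) (hA : A = e '' arcCCW a b) :
    sSup (Set.image2 (ddist e) A A) = diam A := by
  have hbdd : ∀ x y : S1, IsBounded (e '' arcCCW x y) := fun x y =>
    ((isCompact_arcCCW x y).image e.continuous).isBounded
  have hAbdd : IsBounded A := hA ▸ hbdd a b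
  -- lower bound: dist ≤ ddist
  have hdist_le : ∀ p q : Γ, dist p q ≤ ddist e p q := by
    intro p q
    have h1 : dist p q ≤ diam (e '' arcCCW (e.symm p) (e.symm q)) :=
      dist_le_diam_of_mem (hbdd _ _)
        ⟨e.symm p, self_mem_arcCCW _ _, e.apply_symm_apply p⟩
        ⟨e.symm q, right_mem_arcCCW _ _, e.apply_symm_apply q⟩
    have h2 : dist p q ≤ diam (e '' arcCCW (e.symm q) (e.symm p)) := by
      rw [dist_comm]
      exact dist_le_diam_of_mem (hbdd _ _)
        ⟨e.symm q, self_mem_arcCCW _ _, e.apply_symm_apply q⟩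
        ⟨e.symm p, right_mem_arcCCW _ _, e.apply_symm_apply p⟩
    exact le_min h1 h2
  -- upper bound: ddist ≤ diam A on A
  have hdd_le : ∀ p ∈ A, ∀ q ∈ A, ddist e p q ≤ diam A := by
    intro p hp q hq
    rw [hA] at hp hq
    obtain ⟨p', hp', rfl⟩ := hp
    obtain ⟨q', hq', rfl⟩ := hq
    rw [hA]
    have hp'' : e.symm (e p') = p' := e.symm_apply_apply p'
    have hq'' : e.symm (e q') = q' := e.symm_apply_apply q'
    rcases arc_or_arc hp' hq' with h | h
    · calc ddist e (e p') (e q') ≤ diam (e '' arcCCW (e.symm (e p')) (e.symm (e q'))) :=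
            min_le_left _ _
        _ ≤ diam (e '' arcCCW a b) := by
            rw [hp'', hq'']
            exact diam_mono (Set.image_mono h) (hbdd a b)
    · calc ddist e (e p') (e q') ≤ diam (e '' arcCCW (e.symm (e q')) (e.symm (e p'))) :=
            min_le_right _ _
        _ ≤ diam (e '' arcCCW a b) := by
            rw [hp'', hq'']
            exact diam_mono (Set.image_mono h) (hbdd a b)
  have hbddS : BddAbove (Set.image2 (ddist e) A A) := by
    refine ⟨diam A, ?_⟩
    rintro z ⟨p, hp, q, hq, rfl⟩
    exact hdd_le p hp q hq
  rcases A.eq_empty_or_nonempty with rfl | ⟨p₀, hp₀⟩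
  · simp [Real.sSup_empty]
  refine le_antisymm ?_ ?_
  · refine Real.sSup_le ?_ diam_nonneg
    rintro z ⟨p, hp, q, hq, rfl⟩
    exact hdd_le p hp q hq
  · have h0 : (0:ℝ) ≤ sSup (Set.image2 (ddist e) A A) := by
      have : ddist e p₀ p₀ ∈ Set.image2 (ddist e) A A := mem_image2_of_mem hp₀ hp₀
      calc (0:ℝ) = dist p₀ p₀ := by simp
        _ ≤ ddist e p₀ p₀ := hdist_le p₀ p₀
        _ ≤ _ := le_csSup hbddS this
    refine diam_le_of_forall_dist_le h0 ?_
    intro p hp q hq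
    exact (hdist_le p q).trans (le_csSup hbddS (mem_image2_of_mem hp hq))
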